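/- Let A be a self-adjoint operator on a Hilbert space H with resolvent R_z = (−A+z)⁻¹, and let τ : dom(A) → 𝔥 be a bounded linear map (dom(A) with the graph norm) whose kernel is dense in H. Define G_z := (τ R_{z̄})* : 𝔥* → H for z in the resolvent set of A. Then ran(G_z) ∩ dom(A) = {0}. -/
import Mathlib


open ComplexConjugate
noncomputable section

open scoped InnerProductSpace

/-- `Rz` is the resolvent `(-A + z)⁻¹` of the (unbounded) operator `A` at `z`. -/
def IsResolventAt {H : Type*} [NormedAddCommGroup H] [InnerProductSpace ℂ H] [CompleteSpace H]
    (A : H →ₗ.[ℂ] H) (z : ℂ) (Rz : H →L[ℂ] H) : Prop :=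
  (∀ u : H, ∃ hu : Rz u ∈ A.domain, z • Rz u - A ⟨Rz u, hu⟩ = u) ∧
    ∀ x : A.domain, Rz (z • (x : H) - A x) = x

/-- Let `A` be self-adjoint with resolvent `R z` (for `z` in the resolvent set
`Z`), and let `τ : dom A → 𝔥` be bounded w.r.t. the graph norm, with dense kernel (as a subset
of `H`).  Let `T z` be the bounded operator `τ ∘ R z : H → 𝔥` and `G z := (T z̄)* = (τ R_{z̄})*`.
Then `ran (G z) ∩ dom A = {0}`. -/
theorem statement_1 {H 𝔥 : Type*}
    [NormedAddCommGroup H] [InnerProductSpace ℂ H] [CompleteSpace H]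
    [NormedAddCommGroup 𝔥] [InnerProductSpace ℂ 𝔥] [CompleteSpace 𝔥]
    (A : H →ₗ.[ℂ] H) (hA : IsSelfAdjoint A)
    (Z : Set ℂ) (R : ℂ → H →L[ℂ] H)
    (hZres : ∀ z ∈ Z, IsResolventAt A z (R z)) (hZconj : ∀ z ∈ Z, conj z ∈ Z)
    (τ : A.domain →ₗ[ℂ] 𝔥)
    (hτbdd : ∃ C : ℝ, ∀ x : A.domain, ‖τ x‖ ≤ C * (‖(x : H)‖ + ‖A x‖))
    (hker : Dense {u : H | ∃ hu : u ∈ A.domain, τ ⟨u, hu⟩ = 0})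
    (T : ℂ → H →L[ℂ] 𝔥)
    (hT : ∀ z ∈ Z, ∀ (u : H) (hu : R z u ∈ A.domain), T z u = τ ⟨R z u, hu⟩)
    (z : ℂ) (hz : z ∈ Z) :
    ∀ φ : 𝔥, (T (conj z)).adjoint φ ∈ A.domain → (T (conj z)).adjoint φ = 0 := by
  intro φ hφ
  set v : H := (T (conj z)).adjoint φ with hv
  have hzc := hZres (conj z) (hZconj z hz)
  have hzr := hZres z hz
  have hAeq : LinearPMap.adjoint A = A := hA
  have hfa := LinearPMap.adjoint_isFormalAdjoint (T := A) hA.dense_domain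
  rw [hAeq] at hfa
  -- the vector `z • v - A v` is orthogonal to the dense kernel of `τ`
  have key : ∀ u ∈ {u : H | ∃ hu : u ∈ A.domain, τ ⟨u, hu⟩ = 0},
      ⟪z • v - A ⟨v, hφ⟩, u⟫_ℂ = 0 := by
    rintro u ⟨hu, hτu⟩
    have h1 : R (conj z) ((conj z) • u - A ⟨u, hu⟩) = u := hzc.2 ⟨u, hu⟩
    obtain ⟨hmem, -⟩ := hzc.1 ((conj z) • u - A ⟨u, hu⟩)
    have h2 : T (conj z) ((conj z) • u - A ⟨u, hu⟩) = 0 := by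
      rw [hT (conj z) (hZconj z hz) _ hmem]
      have hsub : (⟨R (conj z) ((conj z) • u - A ⟨u, hu⟩), hmem⟩ : A.domain) = ⟨u, hu⟩ :=
        Subtype.ext h1
      rw [hsub, hτu]
    have h3 : ⟪v, (conj z) • u - A ⟨u, hu⟩⟫_ℂ = 0 := by
      rw [hv, ContinuousLinearMap.adjoint_inner_left, h2, inner_zero_right]
    have h4 : ⟪v, (A ⟨u, hu⟩ : H)⟫_ℂ = ⟪(A ⟨v, hφ⟩ : H), u⟫_ℂ :=
      (hfa ⟨v, hφ⟩ ⟨u, hu⟩).symm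
    have h5 : ⟪z • v - A ⟨v, hφ⟩, u⟫_ℂ = ⟪v, (conj z) • u - A ⟨u, hu⟩⟫_ℂ := by
      rw [inner_sub_left, inner_smul_left, inner_sub_right, inner_smul_right, h4]
    rw [h5, h3]
  have hzero : z • v - A ⟨v, hφ⟩ = 0 := by
    have hcont : Continuous fun u : H => ⟪z • v - A ⟨v, hφ⟩, u⟫_ℂ :=
      continuous_const.inner continuous_id
    have heq : (fun u : H => ⟪z • v - A ⟨v, hφ⟩, u⟫_ℂ) = fun _ => (0 : ℂ) :=
      Continuous.ext_on hker hcont continuous_const key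
    exact inner_self_eq_zero.mp (congrFun heq _)
  have hres : R z (z • v - A ⟨v, hφ⟩) = v := hzr.2 ⟨v, hφ⟩
  rw [hzero, map_zero] at hres
  exact hres.symm
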